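/- arXiv:1401.0579 — 2 statements merged into one kernel-verified Lean document; each statement's English description precedes it below -/
import Mathlib

section
/- (Few large coefficients) Let T̃ ⊆ [n] with |T̃| = d, let A be a nonnegative n×m matrix with entries at most Λ, and suppose: for every k the coefficient β_{k,T̃} = Σ_{i∈T̃} A^{(i)}_k; for every pair k ≠ k' the sets Q_k = {i ∈ T̃ : A^{(i)}_k ≥ τ} satisfy |Q_k ∩ Q_{k'}| ≤ κ; and τ ≤ σ⁴/(2ΔΛ² log n), κ ≤ σ⁸d/(8Δ²Λ⁶ log²n). Then the number of indices k with β_{k,T̃} ≥ dσ⁴/(ΔΛ² log n) is at most 4ΔΛ³ log n/σ⁴. -/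
open Finset

set_option maxHeartbeats 1000000

/-- Few large coefficients: for a set `T̃` of `d` pixels, with a nonnegative dictionary
bounded by `Λ`, small `τ`, and pairwise intersections of the sets
`Q_k = {i ∈ T̃ : A_{ik} ≥ τ}` at most `κ`, the number of features `k` with
`β_{k,T̃} ≥ d σ⁴/(Δ Λ² log n)` is at most `4 Δ Λ³ log n / σ⁴`. -/
theorem stmt_12 (n p m : ℕ) (hn : 2 ≤ n)
    (A : Fin p → Fin m → ℝ) (Ttil : Finset (Fin p)) (σ τ κ Λ Δ : ℝ) (d : ℕ)
    (hσ : 0 < σ) (hσ1 : σ ≤ 1) (hΛ : 1 ≤ Λ) (hΔ : 1 ≤ Δ) (hτ : 0 < τ)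
    (hκ0 : 0 ≤ κ) (hd0 : 0 < d)
    (hA0 : ∀ i k, 0 ≤ A i k) (hAΛ : ∀ i k, A i k ≤ Λ)
    (hcard : Ttil.card = d)
    (hκcap : ∀ k k' : Fin m, k ≠ k' →
      (((Ttil.filter (fun i => τ ≤ A i k)) ∩ (Ttil.filter (fun i => τ ≤ A i k'))).card : ℝ)
        ≤ κ)
    (hτbound : τ ≤ σ ^ 4 / (2 * Δ * Λ ^ 2 * Real.log n))
    (hκbound : κ ≤ σ ^ 8 * d / (8 * Δ ^ 2 * Λ ^ 6 * (Real.log n) ^ 2)) :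
    ((univ.filter (fun k : Fin m =>
        (d : ℝ) * σ ^ 4 / (Δ * Λ ^ 2 * Real.log n) ≤ ∑ i ∈ Ttil, A i k)).card : ℝ) ≤
      4 * Δ * Λ ^ 3 * Real.log n / σ ^ 4 := by
  set L : ℝ := Real.log n with hLdef
  have hL0 : 0 < L := Real.log_pos (by exact_mod_cast hn.trans_lt' one_lt_two)
  have hΛ0 : (0:ℝ) < Λ := lt_of_lt_of_le one_pos hΛ
  have hΔ0 : (0:ℝ) < Δ := lt_of_lt_of_le one_pos hΔ
  have hd0R : (0:ℝ) < d := by exact_mod_cast hd0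
  set W : ℝ := σ ^ 4 * d / (2 * Δ * Λ ^ 3 * L) with hWdef
  have hW0 : 0 < W := by positivity
  set K : Finset (Fin m) := univ.filter (fun k : Fin m =>
      (d : ℝ) * σ ^ 4 / (Δ * Λ ^ 2 * L) ≤ ∑ i ∈ Ttil, A i k) with hKdef
  set Q : Fin m → Finset (Fin p) := fun k => Ttil.filter (fun i => τ ≤ A i k) with hQdef
  -- each k ∈ K has |Q k| ≥ W
  have hQW : ∀ k ∈ K, W ≤ ((Q k).card : ℝ) := by
    intro k hk
    rw [hKdef, mem_filter] at hk
    have hk' := hk.2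
    -- split the sum
    have hsplit : ∑ i ∈ Ttil, A i k =
        ∑ i ∈ Q k, A i k + ∑ i ∈ Ttil.filter (fun i => ¬ τ ≤ A i k), A i k :=
      (Finset.sum_filter_add_sum_filter_not Ttil _ _).symm
    have h1 : ∑ i ∈ Q k, A i k ≤ Λ * (Q k).card := by
      rw [mul_comm, ← nsmul_eq_mul]
      exact Finset.sum_le_card_nsmul _ _ Λ (fun i _ => hAΛ i k)
    have h2 : ∑ i ∈ Ttil.filter (fun i => ¬ τ ≤ A i k), A i k ≤ τ * d := by
      calc ∑ i ∈ Ttil.filter (fun i => ¬ τ ≤ A i k), A i k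
          ≤ (Ttil.filter (fun i => ¬ τ ≤ A i k)).card • τ :=
            Finset.sum_le_card_nsmul _ _ τ (fun i hi => le_of_lt (by
              simpa using (Finset.mem_filter.mp hi).2))
        _ ≤ τ * d := by
            rw [nsmul_eq_mul, mul_comm]
            have : ((Ttil.filter (fun i => ¬ τ ≤ A i k)).card : ℝ) ≤ d := by
              exact_mod_cast hcard ▸ Finset.card_filter_le _ _
            nlinarith [hτ.le]
    have hub : (d : ℝ) * σ ^ 4 / (Δ * Λ ^ 2 * L) ≤ Λ * (Q k).card + τ * d := by
      calc (d : ℝ) * σ ^ 4 / (Δ * Λ ^ 2 * L) ≤ ∑ i ∈ Ttil, A i k := hk'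
        _ = _ := hsplit
        _ ≤ Λ * (Q k).card + τ * d := by linarith
    have hD : (0:ℝ) < Δ * Λ ^ 2 * L := by positivity
    rw [div_le_iff₀ hD] at hub
    have hτ2 : τ * (2 * Δ * Λ ^ 2 * L) ≤ σ ^ 4 := by
      rw [← le_div_iff₀ (by positivity)]; exact hτbound
    rw [hWdef, div_le_iff₀ (by positivity)]
    nlinarith [mul_le_mul_of_nonneg_left hτ2 hd0R.le, hd0R.le, hL0.le,
      mul_nonneg (mul_nonneg hΔ0.le (pow_pos hΛ0 2).le) hL0.le]
  set N : ℝ := (K.card : ℝ) with hNdef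
  set S : ℝ := ∑ k ∈ K, ((Q k).card : ℝ) with hSdef
  have hNW : N * W ≤ S := by
    calc N * W = ∑ _k ∈ K, W := by rw [Finset.sum_const, nsmul_eq_mul]
      _ ≤ S := Finset.sum_le_sum hQW
  -- double counting with indicators
  set g : Fin p → ℝ := fun i => (K.filter (fun k => τ ≤ A i k)).card with hgdef
  have hswap : ∑ i ∈ Ttil, g i = S := by
    rw [hSdef, hgdef]
    simp only [hQdef, Finset.natCast_card_filter]
    rw [Finset.sum_comm]
  have hCS : (∑ i ∈ Ttil, g i) ^ 2 ≤ (d : ℝ) * ∑ i ∈ Ttil, g i ^ 2 := by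
    have := sq_sum_le_card_mul_sum_sq (s := Ttil) (f := g)
    rwa [hcard] at this
  have hT : ∑ i ∈ Ttil, g i ^ 2 ≤ S + N ^ 2 * κ := by
    have hexp : ∑ i ∈ Ttil, g i ^ 2 =
        ∑ k ∈ K, ∑ k' ∈ K, ((Q k ∩ Q k').card : ℝ) := by
      have h1 : ∀ i, g i ^ 2 = ∑ k ∈ K, ∑ k' ∈ K,
          (if τ ≤ A i k then (1:ℝ) else 0) * (if τ ≤ A i k' then (1:ℝ) else 0) := by
        intro i
        rw [hgdef, sq]
        simp only [Finset.natCast_card_filter]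
        rw [Finset.sum_mul_sum]
      simp only [h1]
      rw [Finset.sum_comm]
      congr 1
      ext k
      rw [Finset.sum_comm]
      congr 1
      ext k'
      have : ∀ i : Fin p, (if τ ≤ A i k then (1:ℝ) else 0) * (if τ ≤ A i k' then (1:ℝ) else 0)
          = if τ ≤ A i k ∧ τ ≤ A i k' then (1:ℝ) else 0 := by
        intro i; by_cases h1 : τ ≤ A i k <;> by_cases h2 : τ ≤ A i k' <;> simp [h1, h2]
      simp only [this, Finset.sum_boole]
      congr 2
      rw [hQdef]
      exact Finset.filter_and _ _ _
    rw [hexp]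
    have hdiag : ∀ k ∈ K, ∑ k' ∈ K, ((Q k ∩ Q k').card : ℝ) ≤ ((Q k).card : ℝ) + N * κ := by
      intro k hk
      rw [← Finset.add_sum_erase _ _ hk, Finset.inter_self]
      gcongr
      calc ∑ k' ∈ K.erase k, ((Q k ∩ Q k').card : ℝ)
          ≤ ∑ k' ∈ K.erase k, κ := by
            refine Finset.sum_le_sum (fun k' hk' => ?_)
            exact hκcap k k' (fun h => (Finset.mem_erase.mp hk').1 h.symm)
        _ = (K.erase k).card * κ := by rw [Finset.sum_const, nsmul_eq_mul]
        _ ≤ N * κ := by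
            apply mul_le_mul_of_nonneg_right _ hκ0
            rw [hNdef]
            exact_mod_cast Finset.card_erase_le
    calc ∑ k ∈ K, ∑ k' ∈ K, ((Q k ∩ Q k').card : ℝ)
        ≤ ∑ k ∈ K, (((Q k).card : ℝ) + N * κ) := Finset.sum_le_sum hdiag
      _ = S + N * (N * κ) := by rw [Finset.sum_add_distrib, Finset.sum_const, nsmul_eq_mul]
      _ = S + N ^ 2 * κ := by ring
  -- combine everything
  have hS2 : S ^ 2 ≤ (d : ℝ) * S + (d : ℝ) * (N ^ 2 * κ) := by
    have := hCS
    rw [hswap] at this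
    nlinarith [hd0R.le, hT]
  have hκW : 2 * (d : ℝ) * κ ≤ W ^ 2 := by
    have h := mul_le_mul_of_nonneg_left hκbound (by positivity : (0:ℝ) ≤ 2 * d)
    calc 2 * (d:ℝ) * κ ≤ 2 * d * (σ ^ 8 * d / (8 * Δ ^ 2 * Λ ^ 6 * L ^ 2)) := h
      _ = W ^ 2 := by rw [hWdef]; field_simp; ring
  clear_value W K Q N S g
  by_contra hcon
  push_neg at hcon
  have hNW2 : 2 * (d : ℝ) < N * W := by
    have key : (4 * Δ * Λ ^ 3 * L / σ ^ 4) * W = 2 * d := by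
      rw [hWdef]; field_simp; ring
    calc 2 * (d:ℝ) = (4 * Δ * Λ ^ 3 * L / σ ^ 4) * W := key.symm
      _ < N * W := by exact mul_lt_mul_of_pos_right hcon hW0
  -- final contradiction
  have hSpos : 2 * (d:ℝ) < S := lt_of_lt_of_le hNW2 hNW
  have hN0 : 0 < N := by nlinarith
  have hprod : (N * W) * (N * W - d) ≤ S * (S - d) :=
    mul_le_mul hNW (by linarith) (by linarith) (by linarith)
  have h2 : N ^ 2 * W ^ 2 < 2 * ((N * W) * (N * W - d)) := by
    nlinarith [mul_lt_mul_of_pos_left hNW2 (mul_pos hN0 hW0)]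
  nlinarith [hS2, hprod, mul_le_mul_of_nonneg_left hκW (by positivity : (0:ℝ) ≤ N^2)]
end

section
/- Let S be a finite set of features, T a set of t pixels, and suppose each j ∈ S has at most W edges to T in G_τ (entries with |A^{(i)}_j| ≥ τ). Assume ρΣ_{j}(A^{(i)}_j)² ≤ 1 for every pixel i (variance normalization) and ρ·||A^{(i)}_{≤τ}||² ≤ γ for every i, where A^{(i)}_{≤τ} keeps only entries of magnitude ≤ τ. Then Var[Σ_{j∈S} β_{j,T} x_j] = ρΣ_{j∈S} β_{j,T}² ≤ 2tW + 2t²γ, where β_{j,T} = Σ_{i∈T} A^{(i)}_j and the x_j are independent Bernoulli(ρ). -/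
open MeasureTheory ProbabilityTheory Finset

/-- Variance bound in the general case: if each feature `j ∈ S` has at most `W`
`G_τ`-edges into the pixel set `T` of size `t`, every pixel satisfies the variance
normalization `ρ ∑_j A_{ij}² ≤ 1`, and the small entries contribute variance at most `γ`
per pixel, then `Var[∑_{j ∈ S} β_{j,T} x_j] = ρ ∑_{j∈S} β_{j,T}² ≤ 2 t W + 2 t² γ`. -/
theorem stmt_16 {Ω : Type*} [MeasurableSpace Ω] (μ : Measure Ω) [IsProbabilityMeasure μ]
    (p m : ℕ) (A : Fin p → Fin m → ℝ) (T : Finset (Fin p)) (S : Finset (Fin m))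
    (x : Fin m → Ω → ℝ) (ρ τ γ W : ℝ) (t : ℕ)
    (hρ : 0 < ρ) (hτ : 0 < τ) (hγ : 0 ≤ γ) (hW : 0 ≤ W)
    (hmeas : ∀ k, Measurable (x k))
    (hx01 : ∀ k ω, x k ω = 0 ∨ x k ω = 1)
    (hxρ : ∀ k, μ {ω | x k ω = 1} = ENNReal.ofReal ρ)
    (hind : iIndepFun x μ)
    (hT : T.card = t)
    (hWedge : ∀ j ∈ S, ((T.filter (fun i => τ ≤ |A i j|)).card : ℝ) ≤ W)
    (hnorm : ∀ i : Fin p, ρ * ∑ j, (A i j) ^ 2 ≤ 1)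
    (hsmallvar : ∀ i : Fin p, ρ * ∑ j ∈ univ.filter (fun j => |A i j| ≤ τ), (A i j) ^ 2 ≤ γ) :
    variance (fun ω => ∑ j ∈ S, (∑ i ∈ T, A i j) * x j ω) μ ≤
        ρ * ∑ j ∈ S, (∑ i ∈ T, A i j) ^ 2 ∧
      ρ * ∑ j ∈ S, (∑ i ∈ T, A i j) ^ 2 ≤ 2 * t * W + 2 * (t : ℝ) ^ 2 * γ := by
  classical
  set b : Fin m → ℝ := fun j => ∑ i ∈ T, A i j with hb
  -- basic facts about x k
  have hxbd : ∀ k ω, |x k ω| ≤ 1 := by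
    intro k ω; rcases hx01 k ω with h | h <;> simp [h]
  have hmem : ∀ k, MemLp (x k) 2 μ := fun k =>
    MemLp.of_bound (hmeas k).aestronglyMeasurable 1
      (Filter.Eventually.of_forall fun ω => by simpa using hxbd k ω)
  have hint : ∀ k, ∫ ω, x k ω ∂μ = ρ := by
    intro k
    have hset : MeasurableSet {ω | x k ω = 1} := (hmeas k) (measurableSet_singleton 1)
    have hxi : x k = Set.indicator {ω | x k ω = 1} (fun _ => (1 : ℝ)) := by
      ext ω
      rcases hx01 k ω with h | h
      · simp [h, Set.indicator_apply]
      · simp [h, Set.indicator_apply]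
    rw [hxi, integral_indicator_const _ hset, measureReal_def, hxρ k]
    simp [ENNReal.toReal_ofReal hρ.le]
  have hsq : ∀ k, (fun ω => x k ω ^ 2) = x k := by
    intro k; ext ω; rcases hx01 k ω with h | h <;> simp [h]
  have hvar : ∀ k, variance (x k) μ ≤ ρ := by
    intro k
    calc variance (x k) μ ≤ μ[(x k) ^ 2] :=
          variance_le_expectation_sq (hmeas k).aestronglyMeasurable
      _ = ρ := by
          have : ((x k) ^ 2 : Ω → ℝ) = x k := by ext ω; rcases hx01 k ω with h | h <;> simp [h]
          rw [this, hint k]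
  -- first inequality
  have part1 : variance (fun ω => ∑ j ∈ S, b j * x j ω) μ ≤ ρ * ∑ j ∈ S, b j ^ 2 := by
    have heq : (fun ω => ∑ j ∈ S, b j * x j ω) = ∑ j ∈ S, (fun ω => b j * x j ω) := by
      ext ω; simp
    rw [heq]
    have hmem' : ∀ j ∈ S, MemLp (fun ω => b j * x j ω) 2 μ := fun j _ =>
      (hmem j).const_mul (b j)
    have hpair : Set.Pairwise ↑S fun i j =>
        IndepFun (fun ω => b i * x i ω) (fun ω => b j * x j ω) μ := by
      intro i _ j _ hij
      exact (hind.indepFun hij).comp (measurable_const_mul (b i)) (measurable_const_mul (b j))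
    rw [IndepFun.variance_sum hmem' hpair]
    calc ∑ j ∈ S, variance (fun ω => b j * x j ω) μ
        = ∑ j ∈ S, b j ^ 2 * variance (x j) μ := by
          refine Finset.sum_congr rfl fun j _ => ?_
          exact variance_const_mul (b j) (x j) μ
      _ ≤ ∑ j ∈ S, b j ^ 2 * ρ :=
          Finset.sum_le_sum fun j _ =>
            mul_le_mul_of_nonneg_left (hvar j) (sq_nonneg _)
      _ = ρ * ∑ j ∈ S, b j ^ 2 := by rw [Finset.mul_sum]; exact Finset.sum_congr rfl fun j _ => mul_comm _ _
  -- second inequality: pure algebra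
  have part2 : ρ * ∑ j ∈ S, b j ^ 2 ≤ 2 * t * W + 2 * (t : ℝ) ^ 2 * γ := by
    set F : Fin m → Finset (Fin p) := fun j => T.filter (fun i => τ ≤ |A i j|) with hF
    set Fc : Fin m → Finset (Fin p) := fun j => T.filter (fun i => ¬ τ ≤ |A i j|) with hFc
    have hsplit : ∀ j, b j = (∑ i ∈ F j, A i j) + ∑ i ∈ Fc j, A i j := fun j =>
      (Finset.sum_filter_add_sum_filter_not T _ _).symm
    have key : ∀ j ∈ S, b j ^ 2 ≤
        2 * W * (∑ i ∈ T, A i j ^ 2) + 2 * t * ∑ i ∈ Fc j, A i j ^ 2 := by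
      intro j hj
      have h1 : (∑ i ∈ F j, A i j) ^ 2 ≤ W * ∑ i ∈ T, A i j ^ 2 := by
        calc (∑ i ∈ F j, A i j) ^ 2 ≤ (F j).card * ∑ i ∈ F j, A i j ^ 2 :=
              sq_sum_le_card_mul_sum_sq
          _ ≤ W * ∑ i ∈ T, A i j ^ 2 := by
              refine mul_le_mul (hWedge j hj) ?_ ?_ hW
              · exact Finset.sum_le_sum_of_subset_of_nonneg (Finset.filter_subset _ _)
                  (fun i _ _ => sq_nonneg _)
              · exact Finset.sum_nonneg fun i _ => sq_nonneg _
      have h2 : (∑ i ∈ Fc j, A i j) ^ 2 ≤ (t : ℝ) * ∑ i ∈ Fc j, A i j ^ 2 := by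
        calc (∑ i ∈ Fc j, A i j) ^ 2 ≤ (Fc j).card * ∑ i ∈ Fc j, A i j ^ 2 :=
              sq_sum_le_card_mul_sum_sq
          _ ≤ (t : ℝ) * ∑ i ∈ Fc j, A i j ^ 2 := by
              refine mul_le_mul_of_nonneg_right ?_
                (Finset.sum_nonneg fun i _ => sq_nonneg _)
              exact_mod_cast Nat.cast_le.mpr (hT ▸ Finset.card_filter_le T _)
      rw [hsplit j]
      nlinarith [h1, h2, sq_nonneg ((∑ i ∈ F j, A i j) - ∑ i ∈ Fc j, A i j)]
    have hstep : ρ * ∑ j ∈ S, b j ^ 2 ≤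
        ρ * ∑ j ∈ S, (2 * W * (∑ i ∈ T, A i j ^ 2) + 2 * t * ∑ i ∈ Fc j, A i j ^ 2) :=
      mul_le_mul_of_nonneg_left (Finset.sum_le_sum key) hρ.le
    refine hstep.trans ?_
    rw [Finset.sum_add_distrib, mul_add]
    have hA : ρ * ∑ j ∈ S, 2 * W * ∑ i ∈ T, A i j ^ 2 ≤ 2 * t * W := by
      have swap : ∑ j ∈ S, ∑ i ∈ T, A i j ^ 2 = ∑ i ∈ T, ∑ j ∈ S, A i j ^ 2 :=
        Finset.sum_comm
      have e1 : ∑ j ∈ S, 2 * W * ∑ i ∈ T, A i j ^ 2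
          = 2 * W * ∑ j ∈ S, ∑ i ∈ T, A i j ^ 2 := (Finset.mul_sum _ _ _).symm
      have e2 : ∑ i ∈ T, (ρ * ∑ j ∈ S, A i j ^ 2)
          = ρ * ∑ i ∈ T, ∑ j ∈ S, A i j ^ 2 := (Finset.mul_sum _ _ _).symm
      have this : ρ * ∑ j ∈ S, 2 * W * ∑ i ∈ T, A i j ^ 2
          = 2 * W * ∑ i ∈ T, (ρ * ∑ j ∈ S, A i j ^ 2) := by
        rw [e1, swap, e2]; ring
      rw [this]
      have hbound : ∀ i ∈ T, ρ * ∑ j ∈ S, A i j ^ 2 ≤ 1 := by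
        intro i _
        refine le_trans ?_ (hnorm i)
        exact mul_le_mul_of_nonneg_left (Finset.sum_le_sum_of_subset_of_nonneg
          (Finset.subset_univ S) (fun j _ _ => sq_nonneg _)) hρ.le
      calc 2 * W * ∑ i ∈ T, (ρ * ∑ j ∈ S, A i j ^ 2)
          ≤ 2 * W * ∑ i ∈ T, (1 : ℝ) := by
            refine mul_le_mul_of_nonneg_left (Finset.sum_le_sum hbound) (by linarith)
        _ = 2 * t * W := by simp [hT]; ring
    have hB : ρ * ∑ j ∈ S, 2 * t * ∑ i ∈ Fc j, A i j ^ 2 ≤ 2 * (t : ℝ) ^ 2 * γ := by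
      have expand : ∀ j, ∑ i ∈ Fc j, A i j ^ 2
          = ∑ i ∈ T, (if ¬ τ ≤ |A i j| then A i j ^ 2 else 0) := fun j =>
        (Finset.sum_filter _ _)
      have swap : ∑ j ∈ S, ∑ i ∈ T, (if ¬ τ ≤ |A i j| then A i j ^ 2 else 0)
          = ∑ i ∈ T, ∑ j ∈ S, (if ¬ τ ≤ |A i j| then A i j ^ 2 else 0) :=
        Finset.sum_comm
      have hbound : ∀ i ∈ T, ρ * ∑ j ∈ S, (if ¬ τ ≤ |A i j| then A i j ^ 2 else 0) ≤ γ := by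
        intro i _
        refine le_trans ?_ (hsmallvar i)
        refine mul_le_mul_of_nonneg_left ?_ hρ.le
        rw [← Finset.sum_filter]
        refine Finset.sum_le_sum_of_subset_of_nonneg ?_ (fun j _ _ => sq_nonneg _)
        intro j hjf
        simp only [Finset.mem_filter] at hjf ⊢
        exact ⟨Finset.mem_univ j, (lt_of_not_ge hjf.2).le⟩
      have e1 : ∑ j ∈ S, 2 * (t : ℝ) * ∑ i ∈ T, (if ¬ τ ≤ |A i j| then A i j ^ 2 else 0)
          = 2 * (t : ℝ) * ∑ j ∈ S, ∑ i ∈ T, (if ¬ τ ≤ |A i j| then A i j ^ 2 else 0) :=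
        (Finset.mul_sum _ _ _).symm
      have e2 : ∑ i ∈ T, (ρ * ∑ j ∈ S, (if ¬ τ ≤ |A i j| then A i j ^ 2 else 0))
          = ρ * ∑ i ∈ T, ∑ j ∈ S, (if ¬ τ ≤ |A i j| then A i j ^ 2 else 0) :=
        (Finset.mul_sum _ _ _).symm
      have this : ρ * ∑ j ∈ S, 2 * t * ∑ i ∈ Fc j, A i j ^ 2
          = 2 * t * ∑ i ∈ T, (ρ * ∑ j ∈ S, (if ¬ τ ≤ |A i j| then A i j ^ 2 else 0)) := by
        simp_rw [expand]
        rw [e1, swap, e2]; ring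
      rw [this]
      calc 2 * (t : ℝ) * ∑ i ∈ T, (ρ * ∑ j ∈ S, (if ¬ τ ≤ |A i j| then A i j ^ 2 else 0))
          ≤ 2 * (t : ℝ) * ∑ i ∈ T, γ := by
            refine mul_le_mul_of_nonneg_left (Finset.sum_le_sum hbound) (by positivity)
        _ = 2 * (t : ℝ) ^ 2 * γ := by simp [hT]; ring
    linarith
  exact ⟨part1, part2⟩
end
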